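/- Let W, U, σ, V be a differentiable SVD path on an open interval I, and let t ∈ I be such that σ_r(t) ≠ 0 for all r and the squared values σ₁(t)², …, σ_k(t)² are pairwise distinct. Then, with S(t) := diag(σ(t)) and H(t) ∈ ℝ^{k×k} defined by H(t)_{r,r'} = (σ_{r'}(t)² − σ_r(t)²)^{−1} for r ≠ r' and H(t)_{r,r} = 0, the singular vectors satisfy: U′(t) = U(t)·(H(t) ⊙ [U(t)ᵀW′(t)V(t)S(t) + S(t)V(t)ᵀW′(t)ᵀU(t)]) + (I_d − U(t)U(t)ᵀ)·W′(t)·V(t)·S(t)^{−1}, and V′(t) = V(t)·(H(t) ⊙ [S(t)U(t)ᵀW′(t)V(t) + V(t)ᵀW′(t)ᵀU(t)S(t)]) + (I_{d'} − V(t)V(t)ᵀ)·W′(t)ᵀ·U(t)·S(t)^{−1}, where ⊙ is the Hadamard (entrywise) product. -/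

import Mathlib

open Matrix

private lemma entry3 {m n k : ℕ} (M : Matrix (Fin m) (Fin k) ℝ) (v : Fin k → ℝ)
    (N : Matrix (Fin n) (Fin k) ℝ) (p : Fin m) (q : Fin n) :
    (M * Matrix.diagonal v * Nᵀ) p q = ∑ r, M p r * (v r * N q r) := by
  conv_lhs => rw [Matrix.mul_apply]
  simp [Matrix.mul_diagonal, Matrix.transpose_apply, mul_assoc]

private lemma entry2 {m k : ℕ} (M N : Matrix (Fin m) (Fin k) ℝ) (r r' : Fin k) :
    (Mᵀ * N) r r' = ∑ p, M p r * N p r' := by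
  simp [Matrix.mul_apply, Matrix.transpose_apply]


/-- Evolution of singular vectors along a differentiable SVD path: at any time where the
singular values are nonzero and have pairwise distinct squares,
`U′ = U·(H ⊙ [UᵀW′VS + SVᵀW′ᵀU]) + (I − UUᵀ)·W′·V·S⁻¹` and
`V′ = V·(H ⊙ [SUᵀW′V + VᵀW′ᵀUS]) + (I − VVᵀ)·W′ᵀ·U·S⁻¹`, where
`H_{r,r'} = (σ_{r'}² − σ_r²)⁻¹` off the diagonal and `0` on it. -/
theorem stmt12 {d d' : ℕ}
    (I : Set ℝ) (hI_open : IsOpen I) (hI_conn : I.OrdConnected)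
    (W W' : ℝ → Matrix (Fin d) (Fin d') ℝ)
    (U U' : ℝ → Matrix (Fin d) (Fin (min d d')) ℝ)
    (σ σ' : ℝ → Fin (min d d') → ℝ)
    (V V' : ℝ → Matrix (Fin d') (Fin (min d d')) ℝ)
    (hW : ∀ t ∈ I, ∀ p q, HasDerivAt (fun s => W s p q) (W' t p q) t)
    (hU : ∀ t ∈ I, ∀ p q, HasDerivAt (fun s => U s p q) (U' t p q) t)
    (hσ : ∀ t ∈ I, ∀ r, HasDerivAt (fun s => σ s r) (σ' t r) t)
    (hV : ∀ t ∈ I, ∀ p q, HasDerivAt (fun s => V s p q) (V' t p q) t)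
    (hSVD : ∀ t ∈ I, W t = U t * Matrix.diagonal (σ t) * (V t)ᵀ)
    (hUorth : ∀ t ∈ I, (U t)ᵀ * U t = 1)
    (hVorth : ∀ t ∈ I, (V t)ᵀ * V t = 1)
    (t : ℝ) (ht : t ∈ I)
    (hσ_ne : ∀ r, σ t r ≠ 0)
    (hσ_distinct : ∀ r r', r ≠ r' → σ t r ^ 2 ≠ σ t r' ^ 2) :
    let S : Matrix (Fin (min d d')) (Fin (min d d')) ℝ := Matrix.diagonal (σ t)
    let H : Matrix (Fin (min d d')) (Fin (min d d')) ℝ :=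
      Matrix.of fun r r' => if r = r' then 0 else (σ t r' ^ 2 - σ t r ^ 2)⁻¹
    U' t = U t * Matrix.hadamard H
        ((U t)ᵀ * W' t * V t * S + S * (V t)ᵀ * (W' t)ᵀ * U t) +
      ((1 : Matrix (Fin d) (Fin d) ℝ) - U t * (U t)ᵀ) * W' t * V t * S⁻¹ ∧
    V' t = V t * Matrix.hadamard H
        (S * (U t)ᵀ * W' t * V t + (V t)ᵀ * (W' t)ᵀ * U t * S) +
      ((1 : Matrix (Fin d') (Fin d') ℝ) - V t * (V t)ᵀ) * (W' t)ᵀ * U t * S⁻¹ := by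
  intro S H
  have hS : S = Matrix.diagonal (σ t) := rfl
  have hHdef : H = Matrix.of fun r r' =>
      if r = r' then 0 else (σ t r' ^ 2 - σ t r ^ 2)⁻¹ := rfl
  have hUo := hUorth t ht
  have hVo := hVorth t ht
  set A := (U t)ᵀ * U' t with hAdef
  set B := (V t)ᵀ * V' t with hBdef
  set S' := Matrix.diagonal (σ' t) with hS'def
  -- derivative of the product
  have hWd : W' t = U' t * S * (V t)ᵀ + U t * S' * (V t)ᵀ + U t * S * (V' t)ᵀ := by
    ext p q
    have h1 : HasDerivAt (fun s => ∑ r, U s p r * (σ s r * V s q r))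
        (∑ r, (U' t p r * (σ t r * V t q r)
          + U t p r * (σ' t r * V t q r + σ t r * V' t q r))) t := by
      apply HasDerivAt.fun_sum
      intro r _
      exact (hU t ht p r).mul ((hσ t ht r).mul (hV t ht q r))
    have h2 : (fun s => W s p q) =ᶠ[nhds t] (fun s => ∑ r, U s p r * (σ s r * V s q r)) := by
      filter_upwards [hI_open.mem_nhds ht] with s hs
      rw [hSVD s hs, entry3]
    have h4 := (hW t ht p q).unique (h1.congr_of_eventuallyEq h2)
    rw [h4]
    simp only [Matrix.add_apply, hS, hS'def, entry3]
    rw [← Finset.sum_add_distrib, ← Finset.sum_add_distrib]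
    exact Finset.sum_congr rfl fun r _ => by ring
  -- skew-symmetry of A
  have hAskew : ∀ r r', A r' r = -(A r r') := by
    intro r r'
    have h1 : HasDerivAt (fun s => ∑ p, U s p r * U s p r')
        (∑ p, (U' t p r * U t p r' + U t p r * U' t p r')) t := by
      apply HasDerivAt.fun_sum
      intro p _
      exact (hU t ht p r).mul (hU t ht p r')
    have h2 : (fun s => ∑ p, U s p r * U s p r') =ᶠ[nhds t]
        (fun _ => ((1 : Matrix (Fin (min d d')) (Fin (min d d')) ℝ) r r')) := by
      filter_upwards [hI_open.mem_nhds ht] with s hs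
      rw [← hUorth s hs, entry2]
    have h4 := (((hasDerivAt_const t _).congr_of_eventuallyEq h2).unique h1)
    rw [Finset.sum_add_distrib] at h4
    have e1 : A r r' = ∑ p, U t p r * U' t p r' := by
      rw [hAdef, entry2]
    have e2 : A r' r = ∑ p, U' t p r * U t p r' := by
      rw [hAdef, entry2]
      exact Finset.sum_congr rfl fun p _ => by ring
    rw [e1, e2]
    linarith [h4.symm]
  have hBskew : ∀ r r', B r' r = -(B r r') := by
    intro r r'
    have h1 : HasDerivAt (fun s => ∑ p, V s p r * V s p r')
        (∑ p, (V' t p r * V t p r' + V t p r * V' t p r')) t := by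
      apply HasDerivAt.fun_sum
      intro p _
      exact (hV t ht p r).mul (hV t ht p r')
    have h2 : (fun s => ∑ p, V s p r * V s p r') =ᶠ[nhds t]
        (fun _ => ((1 : Matrix (Fin (min d d')) (Fin (min d d')) ℝ) r r')) := by
      filter_upwards [hI_open.mem_nhds ht] with s hs
      rw [← hVorth s hs, entry2]
    have h4 := (((hasDerivAt_const t _).congr_of_eventuallyEq h2).unique h1)
    rw [Finset.sum_add_distrib] at h4
    have e1 : B r r' = ∑ p, V t p r * V' t p r' := by
      rw [hBdef, entry2]
    have e2 : B r' r = ∑ p, V' t p r * V t p r' := by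
      rw [hBdef, entry2]
      exact Finset.sum_congr rfl fun p _ => by ring
    rw [e1, e2]
    linarith [h4.symm]
  -- P = Uᵀ W' V
  have hP : (U t)ᵀ * W' t * V t = A * S + S' + S * Bᵀ := by
    rw [hWd]
    simp only [Matrix.mul_add, Matrix.add_mul, ← Matrix.mul_assoc]
    rw [Matrix.mul_assoc ((U t)ᵀ * U' t * S) (V t)ᵀ (V t), hVo, Matrix.mul_one]
    rw [Matrix.mul_assoc ((U t)ᵀ * U t * S') (V t)ᵀ (V t), hVo, Matrix.mul_one]
    rw [hUo, Matrix.one_mul, Matrix.one_mul]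
    rw [Matrix.mul_assoc S (V' t)ᵀ (V t)]
    rw [hBdef, Matrix.transpose_mul, Matrix.transpose_transpose]
  have hPT : (V t)ᵀ * (W' t)ᵀ * U t = ((U t)ᵀ * W' t * V t)ᵀ := by
    simp [Matrix.transpose_mul, Matrix.mul_assoc]
  -- S invertibility
  have hSdet : IsUnit S.det := by
    rw [hS, Matrix.det_diagonal]
    exact (Finset.prod_ne_zero_iff.mpr fun r _ => hσ_ne r).isUnit
  have hSS : S * S⁻¹ = 1 := Matrix.mul_nonsing_inv S hSdet
  have hne : ∀ r r' : Fin (min d d'), r ≠ r' → σ t r' ^ 2 - σ t r ^ 2 ≠ 0 := by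
    intro r r' h
    exact sub_ne_zero.mpr (hσ_distinct r' r (Ne.symm h))
  -- Hadamard identity for U
  have hHadU : Matrix.hadamard H
      ((U t)ᵀ * W' t * V t * S + S * (V t)ᵀ * (W' t)ᵀ * U t) = A := by
    have hassoc : S * (V t)ᵀ * (W' t)ᵀ * U t = S * ((V t)ᵀ * (W' t)ᵀ * U t) := by
      simp [Matrix.mul_assoc]
    rw [hassoc, hPT, hP]
    ext r r'
    by_cases h : r = r'
    · subst h
      have hz := hAskew r r
      have hH0 : H r r = 0 := by simp [hHdef]
      rw [Matrix.hadamard_apply, hH0, zero_mul]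
      linarith
    · rw [Matrix.hadamard_apply, show H r r' = (σ t r' ^ 2 - σ t r ^ 2)⁻¹ from by
        simp [hHdef, h]]
      have key : ((A * S + S' + S * Bᵀ) * S + S * (A * S + S' + S * Bᵀ)ᵀ) r r'
          = (σ t r' ^ 2 - σ t r ^ 2) * A r r' := by
        simp only [Matrix.add_apply, hS, hS'def, Matrix.mul_diagonal, Matrix.diagonal_mul,
          Matrix.transpose_apply, Matrix.diagonal_apply_ne _ h,
          Matrix.diagonal_apply_ne _ (Ne.symm h)]
        rw [hAskew r r', hBskew r r']
        ring
      rw [key, ← mul_assoc, inv_mul_cancel₀ (hne r r' h), one_mul]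
  -- second summand for U
  have hUker : ((1 : Matrix (Fin d) (Fin d) ℝ) - U t * (U t)ᵀ) * U t = 0 := by
    rw [Matrix.sub_mul, Matrix.one_mul, Matrix.mul_assoc, hUo, Matrix.mul_one, sub_self]
  have hUpart2 : ((1 : Matrix (Fin d) (Fin d) ℝ) - U t * (U t)ᵀ) * W' t * V t * S⁻¹
      = U' t - U t * A := by
    have h5 : ((1 : Matrix (Fin d) (Fin d) ℝ) - U t * (U t)ᵀ) * W' t * V t
        = (U' t - U t * A) * S := by
      rw [hWd]
      simp only [Matrix.mul_add, Matrix.add_mul, ← Matrix.mul_assoc]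
      rw [show ((1 : Matrix (Fin d) (Fin d) ℝ) - U t * (U t)ᵀ) * U t = 0 from hUker]
      simp only [Matrix.zero_mul, add_zero]
      rw [Matrix.mul_assoc (((1 : Matrix (Fin d) (Fin d) ℝ) - U t * (U t)ᵀ) * U' t * S)
        (V t)ᵀ (V t), hVo, Matrix.mul_one]
      rw [Matrix.sub_mul, Matrix.sub_mul, Matrix.sub_mul, Matrix.one_mul]
      rw [hAdef, ← Matrix.mul_assoc]
    rw [h5, Matrix.mul_assoc, hSS, Matrix.mul_one]
  -- Hadamard identity for V
  have hHadV : Matrix.hadamard H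
      (S * (U t)ᵀ * W' t * V t + (V t)ᵀ * (W' t)ᵀ * U t * S) = B := by
    have hassoc : S * (U t)ᵀ * W' t * V t = S * ((U t)ᵀ * W' t * V t) := by
      simp [Matrix.mul_assoc]
    rw [hassoc, hPT, hP]
    ext r r'
    by_cases h : r = r'
    · subst h
      have hz := hBskew r r
      have hH0 : H r r = 0 := by simp [hHdef]
      rw [Matrix.hadamard_apply, hH0, zero_mul]
      linarith
    · rw [Matrix.hadamard_apply, show H r r' = (σ t r' ^ 2 - σ t r ^ 2)⁻¹ from by
        simp [hHdef, h]]
      have key : (S * (A * S + S' + S * Bᵀ) + (A * S + S' + S * Bᵀ)ᵀ * S) r r'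
          = (σ t r' ^ 2 - σ t r ^ 2) * B r r' := by
        simp only [Matrix.add_apply, hS, hS'def, Matrix.mul_diagonal, Matrix.diagonal_mul,
          Matrix.transpose_apply, Matrix.diagonal_apply_ne _ h,
          Matrix.diagonal_apply_ne _ (Ne.symm h)]
        rw [hAskew r r', hBskew r r']
        ring
      rw [key, ← mul_assoc, inv_mul_cancel₀ (hne r r' h), one_mul]
  -- second summand for V
  have hWdT : (W' t)ᵀ = V t * S * (U' t)ᵀ + V t * S' * (U t)ᵀ + V' t * S * (U t)ᵀ := by
    rw [hWd]
    simp [Matrix.transpose_mul, Matrix.transpose_add, hS, hS'def, Matrix.diagonal_transpose,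
      Matrix.mul_assoc]
  have hVker : ((1 : Matrix (Fin d') (Fin d') ℝ) - V t * (V t)ᵀ) * V t = 0 := by
    rw [Matrix.sub_mul, Matrix.one_mul, Matrix.mul_assoc, hVo, Matrix.mul_one, sub_self]
  have hVpart2 : ((1 : Matrix (Fin d') (Fin d') ℝ) - V t * (V t)ᵀ) * (W' t)ᵀ * U t * S⁻¹
      = V' t - V t * B := by
    have h5 : ((1 : Matrix (Fin d') (Fin d') ℝ) - V t * (V t)ᵀ) * (W' t)ᵀ * U t
        = (V' t - V t * B) * S := by
      rw [hWdT]
      simp only [Matrix.mul_add, Matrix.add_mul, ← Matrix.mul_assoc]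
      rw [show ((1 : Matrix (Fin d') (Fin d') ℝ) - V t * (V t)ᵀ) * V t = 0 from hVker]
      simp only [Matrix.zero_mul, zero_add]
      rw [Matrix.mul_assoc (((1 : Matrix (Fin d') (Fin d') ℝ) - V t * (V t)ᵀ) * V' t * S)
        (U t)ᵀ (U t), hUo, Matrix.mul_one]
      rw [Matrix.sub_mul, Matrix.sub_mul, Matrix.sub_mul, Matrix.one_mul]
      rw [hBdef, ← Matrix.mul_assoc]
    rw [h5, Matrix.mul_assoc, hSS, Matrix.mul_one]
  constructor
  · rw [hHadU, hUpart2]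
    abel
  · rw [hHadV, hVpart2]
    abel
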